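/- For every L > 0 there exists ε > 0 such that the following holds: for every h* with 1/L ≤ h* ≤ L, every 2π-periodic C⁴ function h : ℝ → ℝ with h(θ) > 0 for all θ, satisfying (d/dθ)[h(θ)²/2 + h(θ)³·(h'(θ) + h'''(θ))] = 0 for all θ ∈ ℝ, ∫₀^{2π} h(θ) dθ = 2π·h*, and |h(θ) − h*| ≤ ε for all θ, satisfies h(θ) = h* for all θ. -/

import Mathlib

open Real MeasureTheory intervalIntegral Complex AddCircle

lemma parseval_aux (G : C(AddCircle (2*π), ℂ)) :
    haveI : Fact (0 < 2*π) := ⟨by positivity⟩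
    Summable (fun n => ‖fourierCoeff (⇑G) n‖^2) ∧
      ∑' n : ℤ, ‖fourierCoeff (⇑G) n‖^2 = (1/(2*π)) * ∫ x in (0:ℝ)..(2*π), ‖G (x : AddCircle (2*π))‖^2 := by
  haveI : Fact (0 < 2*π) := ⟨by positivity⟩
  set F := ContinuousMap.toLp (E := ℂ) 2 haarAddCircle ℂ G with hF
  have hcoeff : ∀ n, fourierCoeff (⇑(F : MeasureTheory.Lp ℂ 2 haarAddCircle)) n = fourierCoeff (⇑G) n :=
    fourierCoeff_toLp G
  constructor
  · have hm := lp.memℓp (fourierBasis.repr F)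
    have hs := hm.summable (by norm_num)
    have : (fun n : ℤ => ‖fourierBasis.repr F n‖ ^ ((2:ENNReal).toReal)) =
        fun n : ℤ => ‖fourierCoeff (⇑G) n‖^2 := by
      funext n
      rw [fourierBasis_repr, hcoeff]
      norm_num
    rwa [this] at hs
  · have hpars := tsum_sq_fourierCoeff F
    simp_rw [hcoeff] at hpars
    rw [hpars]
    have h1 : ∫ t : AddCircle (2*π), ‖(F : MeasureTheory.Lp ℂ 2 haarAddCircle) t‖^2 ∂haarAddCircle
        = ∫ t : AddCircle (2*π), ‖G t‖^2 ∂haarAddCircle := by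
      apply MeasureTheory.integral_congr_ae
      filter_upwards [ContinuousMap.coeFn_toLp (𝕜 := ℂ) (p := (2:ENNReal)) haarAddCircle G] with t ht
      rw [ht]
    rw [h1]
    have h2 : ∫ x in (0:ℝ)..(0+2*π), ‖G (x : AddCircle (2*π))‖^2
        = ∫ t : AddCircle (2*π), ‖G t‖^2 := by
      exact AddCircle.intervalIntegral_preimage (2*π) 0 (fun t => ‖G t‖^2)
    rw [zero_add] at h2
    have h3 : ∫ t : AddCircle (2*π), ‖G t‖^2 = (2*π) * ∫ t : AddCircle (2*π), ‖G t‖^2 ∂haarAddCircle := by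
      rw [volume_eq_smul_haarAddCircle, MeasureTheory.integral_smul_measure _ _,
        ENNReal.toReal_ofReal (by positivity : (0:ℝ) ≤ 2*π), smul_eq_mul]
    rw [h2, h3, ← mul_assoc, one_div, inv_mul_cancel₀ (by positivity : (2*π:ℝ) ≠ 0), one_mul]

lemma coeff_deriv_rel {u v : ℝ → ℂ} (hv : Continuous v)
    (hd : ∀ x, HasDerivAt u (v x) x) (hpu : Function.Periodic u (2*π)) (n : ℤ) :
    (∫ x in (0:ℝ)..2*π, fourier (-n) (x : AddCircle (2*π)) • v x)
      = Complex.I * n * ∫ x in (0:ℝ)..2*π, fourier (-n) (x : AddCircle (2*π)) • u x := by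
  haveI hT : Fact (0 < 2*π) := ⟨by positivity⟩
  have hu : Continuous u := by
    have : Differentiable ℝ u := fun x => (hd x).differentiableAt
    exact this.continuous
  have huval : u (2*π) = u 0 := by simpa using hpu 0
  have hFc : Continuous fun x : ℝ => (fourier (-n) (x : AddCircle (2*π)) : ℂ) :=
    (map_continuous (fourier (-n))).comp (AddCircle.continuous_mk' _)
  simp only [smul_eq_mul]
  rcases eq_or_ne n 0 with rfl | hn
  · simp only [neg_zero, fourier_zero, one_mul, Int.cast_zero, mul_zero, zero_mul]
    rw [integral_eq_sub_of_hasDerivAt (fun x _ => hd x) (hv.intervalIntegrable _ _)]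
    rw [huval, sub_self]
  · set K : ℂ := ((2*π : ℝ) : ℂ) / (-2 * π * Complex.I * n) with hK
    set A : ℝ → ℂ := fun y => K * fourier (-n) (y : AddCircle (2*π)) with hA
    have hAd : ∀ x : ℝ, HasDerivAt A (fourier (-n) (x : AddCircle (2*π))) x := fun x =>
      has_antideriv_at_fourier_neg hT hn x
    have hprod : ∀ x : ℝ, HasDerivAt (fun y => A y * u y)
        (fourier (-n) (x : AddCircle (2*π)) * u x + A x * v x) x := fun x =>
      (hAd x).mul (hd x)
    have hint : (∫ x in (0:ℝ)..2*π,
        (fourier (-n) (x : AddCircle (2*π)) * u x + A x * v x)) = A (2*π) * u (2*π) - A 0 * u 0 :=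
      integral_eq_sub_of_hasDerivAt (fun x _ => hprod x)
        (((hFc.mul hu).add ((continuous_const.mul hFc).mul hv)).intervalIntegrable _ _)
    have hcoe : ((2*π : ℝ) : AddCircle (2*π)) = ((0:ℝ) : AddCircle (2*π)) := by
      simpa using AddCircle.coe_add_period (2*π) 0
    have hAval : A (2*π) = A 0 := by simp only [hA, hcoe]
    rw [hAval, huval, sub_self] at hint
    rw [intervalIntegral.integral_add (f := fun x => fourier (-n) (x : AddCircle (2*π)) * u x)
      (g := fun x => A x * v x) ((hFc.mul hu).intervalIntegrable _ _)
      (((continuous_const.mul hFc).mul hv).intervalIntegrable _ _)] at hint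
    have hsplit : (∫ x in (0:ℝ)..2*π, A x * v x)
        = K * ∫ x in (0:ℝ)..2*π, fourier (-n) (x : AddCircle (2*π)) * v x := by
      simp_rw [hA, mul_assoc]
      exact intervalIntegral.integral_const_mul K _
    rw [hsplit] at hint
    have hπC : ((π : ℝ) : ℂ) ≠ 0 := by exact_mod_cast Real.pi_ne_zero
    have hnC : ((n : ℤ) : ℂ) ≠ 0 := by exact_mod_cast hn
    have hKmul : K * (Complex.I * n) = -1 := by
      rw [hK]
      push_cast
      field_simp
    have hKne : K ≠ 0 := by
      intro h0
      rw [h0, zero_mul] at hKmul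
      norm_num at hKmul
    have h2 : (∫ x in (0:ℝ)..2*π, fourier (-n) (x : AddCircle (2*π)) * v x)
        = Complex.I * n * ∫ x in (0:ℝ)..2*π, fourier (-n) (x : AddCircle (2*π)) * u x := by
      linear_combination (-(Complex.I * (n:ℂ))) * hint
        + (∫ x in (0:ℝ)..2*π, fourier (-n) (x : AddCircle (2*π)) * v x) * hKmul
    exact h2

lemma third_deriv_neg {f1 f2 f3 : ℝ → ℝ}
    (hc2 : Continuous f2)
    (hd1 : ∀ x, HasDerivAt f1 (f2 x) x) (hd2 : ∀ x, HasDerivAt f2 (f3 x) x)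
    (hp1 : Function.Periodic f1 (2*π)) (hp2 : Function.Periodic f2 (2*π))
    (hmean : (∫ x in (0:ℝ)..2*π, f1 x) = 0)
    (henergy : (∫ x in (0:ℝ)..2*π, f1 x * f1 x) = ∫ x in (0:ℝ)..2*π, f2 x * f2 x) :
    ∀ x, f3 x = - f1 x := by
  haveI hT : Fact (0 < 2*π) := ⟨by positivity⟩
  have hdiff1 : Differentiable ℝ f1 := fun x => (hd1 x).differentiableAt
  have hc1 : Continuous f1 := hdiff1.continuous
  set g1 : ℝ → ℂ := fun x => (f1 x : ℂ) with hg1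
  set g2 : ℝ → ℂ := fun x => (f2 x : ℂ) with hg2
  have hpg1 : Function.Periodic g1 (2*π) := fun x => by simp [hg1, hp1 x]
  have hpg2 : Function.Periodic g2 (2*π) := fun x => by simp [hg2, hp2 x]
  have hgc1 : Continuous g1 := Complex.continuous_ofReal.comp hc1
  have hgc2 : Continuous g2 := Complex.continuous_ofReal.comp hc2
  have hgd1 : ∀ x, HasDerivAt g1 (g2 x) x := fun x => (hd1 x).ofReal_comp
  have hgd2 : ∀ x, HasDerivAt g2 ((f3 x : ℂ)) x := fun x => (hd2 x).ofReal_comp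
  set Gc1 : C(AddCircle (2*π), ℂ) :=
    ⟨hpg1.lift, by unfold Function.Periodic.lift; exact hgc1.quotient_liftOn' _⟩ with hGc1
  set Gc2 : C(AddCircle (2*π), ℂ) :=
    ⟨hpg2.lift, by unfold Function.Periodic.lift; exact hgc2.quotient_liftOn' _⟩ with hGc2
  have hco1 : ∀ x : ℝ, Gc1 (x : AddCircle (2*π)) = g1 x := fun x => hpg1.lift_coe x
  have hco2 : ∀ x : ℝ, Gc2 (x : AddCircle (2*π)) = g2 x := fun x => hpg2.lift_coe x
  set c1 : ℤ → ℂ := fourierCoeff (⇑Gc1) with hc1def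
  set c2 : ℤ → ℂ := fourierCoeff (⇑Gc2) with hc2def
  -- integral formulas
  have hint1 : ∀ n, c1 n = (1 / (2*π)) •
      ∫ x in (0:ℝ)..2*π, fourier (-n) (x : AddCircle (2*π)) • g1 x := by
    intro n
    rw [hc1def]
    have := fourierCoeff_eq_intervalIntegral (⇑Gc1) n 0
    rw [zero_add] at this
    simp_rw [this, hco1]
  have hint2 : ∀ n, c2 n = (1 / (2*π)) •
      ∫ x in (0:ℝ)..2*π, fourier (-n) (x : AddCircle (2*π)) • g2 x := by
    intro n
    rw [hc2def]
    have := fourierCoeff_eq_intervalIntegral (⇑Gc2) n 0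
    rw [zero_add] at this
    simp_rw [this, hco2]
  -- derivative relation
  have hrel : ∀ n : ℤ, c2 n = Complex.I * n * c1 n := by
    intro n
    rw [hint1 n, hint2 n, coeff_deriv_rel hgc2 hgd1 hpg1 n]
    rw [Complex.real_smul, Complex.real_smul]
    ring
  -- Parseval
  obtain ⟨hsum1, hts1⟩ := parseval_aux Gc1
  obtain ⟨hsum2, hts2⟩ := parseval_aux Gc2
  have hnorm1 : ∀ x : ℝ, ‖Gc1 (x : AddCircle (2*π))‖^2 = f1 x * f1 x := by
    intro x
    rw [hco1, hg1]
    simp only [Complex.norm_real, Real.norm_eq_abs, _root_.sq_abs]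
    ring
  have hnorm2 : ∀ x : ℝ, ‖Gc2 (x : AddCircle (2*π))‖^2 = f2 x * f2 x := by
    intro x
    rw [hco2, hg2]
    simp only [Complex.norm_real, Real.norm_eq_abs, _root_.sq_abs]
    ring
  have hts1' : ∑' n : ℤ, ‖c1 n‖^2 = (1/(2*π)) * ∫ x in (0:ℝ)..2*π, f1 x * f1 x := by
    rw [hc1def, hts1]
    congr 1
    exact intervalIntegral.integral_congr fun x _ => hnorm1 x
  have hts2' : ∑' n : ℤ, ‖c2 n‖^2 = (1/(2*π)) * ∫ x in (0:ℝ)..2*π, f2 x * f2 x := by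
    rw [hc2def, hts2]
    congr 1
    exact intervalIntegral.integral_congr fun x _ => hnorm2 x
  have hsums_eq : ∑' n : ℤ, ‖c2 n‖^2 = ∑' n : ℤ, ‖c1 n‖^2 := by
    rw [hts1', hts2', henergy]
  -- c1 0 = 0
  have hc10 : c1 0 = 0 := by
    rw [hint1 0]
    simp only [neg_zero, fourier_zero, one_smul]
    have : (∫ x in (0:ℝ)..2*π, g1 x) = ((∫ x in (0:ℝ)..2*π, f1 x : ℝ) : ℂ) := by
      rw [hg1]
      exact intervalIntegral.integral_ofReal
    rw [this, hmean]
    simp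
  -- termwise
  have hterm : ∀ n : ℤ, ‖c2 n‖^2 = (n:ℝ)^2 * ‖c1 n‖^2 := by
    intro n
    rw [hrel n]
    simp only [norm_mul, Complex.norm_I, one_mul, Complex.norm_intCast]
    rw [mul_pow, _root_.sq_abs]
  have hnn : ∀ n : ℤ, 0 ≤ ‖c2 n‖^2 - ‖c1 n‖^2 := by
    intro n
    rcases eq_or_ne n 0 with rfl | h0
    · simp [hc10, hterm 0]
    · have h1 : (1:ℝ) ≤ (n:ℝ)^2 := by
        have h1' : (1:ℤ) ≤ n^2 := by
          rcases lt_or_gt_of_ne h0 with h | h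
          · nlinarith
          · nlinarith
        exact_mod_cast h1'
      have h2 : (0:ℝ) ≤ ‖c1 n‖^2 := sq_nonneg _
      have := hterm n
      nlinarith
  have hzero : ∀ n : ℤ, ‖c2 n‖^2 - ‖c1 n‖^2 = 0 := by
    have hs : Summable (fun n : ℤ => ‖c2 n‖^2 - ‖c1 n‖^2) := hsum2.sub hsum1
    have ht : ∑' n : ℤ, (‖c2 n‖^2 - ‖c1 n‖^2) = 0 := by
      have h : ∑' n : ℤ, (‖c2 n‖^2 - ‖c1 n‖^2)
          = (∑' n : ℤ, ‖c2 n‖^2) - ∑' n : ℤ, ‖c1 n‖^2 := Summable.tsum_sub hsum2 hsum1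
      rw [h, hsums_eq, sub_self]
    intro n
    exact le_antisymm ((Summable.le_tsum hs n fun m _ => hnn m).trans ht.le) (hnn n)
  have hvanish : ∀ n : ℤ, n ∉ ({-1, 1} : Finset ℤ) → c1 n = 0 := by
    intro n hn
    rcases eq_or_ne n 0 with rfl | h0
    · exact hc10
    · have hn1 : n ≠ 1 := by intro h; apply hn; simp [h]
      have hn2 : n ≠ -1 := by intro h; apply hn; simp [h]
      have hfac : ((n:ℝ)^2 - 1) * ‖c1 n‖^2 = 0 := by
        have h := hzero n
        rw [hterm n] at h
        nlinarith [h]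
      have hne : ((n:ℝ)^2 - 1) ≠ 0 := by
        have h4 : (4:ℤ) ≤ n^2 := by
          rcases (by omega : 2 ≤ n ∨ n ≤ -2) with h | h <;> nlinarith
        have h4' : (4:ℝ) ≤ (n:ℝ)^2 := by exact_mod_cast h4
        intro hcon
        nlinarith
      have : ‖c1 n‖^2 = 0 := by
        rcases mul_eq_zero.1 hfac with h | h
        · exact absurd h hne
        · exact h
      have : ‖c1 n‖ = 0 := by nlinarith [norm_nonneg (c1 n)]
      exact norm_eq_zero.1 this

  -- pointwise representation of g1
  have hsummable : Summable (fourierCoeff (⇑Gc1)) :=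
    summable_of_ne_finset_zero (s := ({-1, 1} : Finset ℤ)) hvanish
  have hpt : ∀ x : ℝ, g1 x = c1 (-1) * fourier (-1) (x : AddCircle (2*π))
      + c1 1 * fourier 1 (x : AddCircle (2*π)) := by
    intro x
    have h1 := has_pointwise_sum_fourier_series_of_summable hsummable ((x : ℝ) : AddCircle (2*π))
    have h2 : HasSum (fun n : ℤ => fourierCoeff (⇑Gc1) n • fourier n ((x : ℝ) : AddCircle (2*π)))
        (∑ n ∈ ({-1, 1} : Finset ℤ), fourierCoeff (⇑Gc1) n • fourier n ((x:ℝ) : AddCircle (2*π))) := by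
      apply hasSum_sum_of_ne_finset_zero
      intro n hn
      have hv := hvanish n hn
      rw [hc1def] at hv
      rw [hv, zero_smul]
    have h3 := h1.unique h2
    rw [hco1] at h3
    rw [h3, Finset.sum_pair (by decide : (-1:ℤ) ≠ 1)]
    simp only [smul_eq_mul]
    rfl
  -- derivative machinery for trigonometric polynomials
  have hfd : ∀ (a : ℂ) (n : ℤ) (x : ℝ),
      HasDerivAt (fun y : ℝ => a * fourier n (y : AddCircle (2*π)))
        ((Complex.I * n * a) * fourier n (x : AddCircle (2*π))) x := by
    intro a n x
    have h := (hasDerivAt_fourier (2*π) n x).const_mul a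
    refine h.congr_deriv ?_
    have hfac : (2 * (π:ℂ) * Complex.I * n / ((2*π : ℝ) : ℂ)) = Complex.I * n := by
      push_cast
      have hpi : ((π:ℂ)) ≠ 0 := by exact_mod_cast Real.pi_ne_zero
      field_simp
    rw [← hfac]
    ring
  set F1 : ℝ → ℂ := fun y => fourier (-1 : ℤ) (y : AddCircle (2*π)) with hF1
  set F2 : ℝ → ℂ := fun y => fourier (1 : ℤ) (y : AddCircle (2*π)) with hF2
  have hwd1 : ∀ x : ℝ, HasDerivAt (fun y : ℝ => c1 (-1) * F1 y + c1 1 * F2 y)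
      ((Complex.I * ((-1:ℤ):ℂ) * c1 (-1)) * F1 x + (Complex.I * ((1:ℤ):ℂ) * c1 1) * F2 x) x := by
    intro x
    exact (hfd (c1 (-1)) (-1) x).add (hfd (c1 1) 1 x)
  have hg1w : g1 = fun y => c1 (-1) * F1 y + c1 1 * F2 y := funext fun y => hpt y
  have hstep2 : ∀ x : ℝ, g2 x = (Complex.I * ((-1:ℤ):ℂ) * c1 (-1)) * F1 x
      + (Complex.I * ((1:ℤ):ℂ) * c1 1) * F2 x := by
    intro x
    have hder : HasDerivAt g1 ((Complex.I * ((-1:ℤ):ℂ) * c1 (-1)) * F1 x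
        + (Complex.I * ((1:ℤ):ℂ) * c1 1) * F2 x) x := by
      rw [hg1w]; exact hwd1 x
    exact (hgd1 x).unique hder
  have hwd2 : ∀ x : ℝ, HasDerivAt
      (fun y : ℝ => (Complex.I * ((-1:ℤ):ℂ) * c1 (-1)) * F1 y + (Complex.I * ((1:ℤ):ℂ) * c1 1) * F2 y)
      ((Complex.I * ((-1:ℤ):ℂ) * (Complex.I * ((-1:ℤ):ℂ) * c1 (-1))) * F1 x
        + (Complex.I * ((1:ℤ):ℂ) * (Complex.I * ((1:ℤ):ℂ) * c1 1)) * F2 x) x := by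
    intro x
    exact (hfd (Complex.I * ((-1:ℤ):ℂ) * c1 (-1)) (-1) x).add (hfd (Complex.I * ((1:ℤ):ℂ) * c1 1) 1 x)
  have hg2w : g2 = fun y => (Complex.I * ((-1:ℤ):ℂ) * c1 (-1)) * F1 y
      + (Complex.I * ((1:ℤ):ℂ) * c1 1) * F2 y := funext fun y => hstep2 y
  have hstep3 : ∀ x : ℝ, ((f3 x : ℂ))
      = (Complex.I * ((-1:ℤ):ℂ) * (Complex.I * ((-1:ℤ):ℂ) * c1 (-1))) * F1 x
      + (Complex.I * ((1:ℤ):ℂ) * (Complex.I * ((1:ℤ):ℂ) * c1 1)) * F2 x := by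
    intro x
    have hder : HasDerivAt g2 ((Complex.I * ((-1:ℤ):ℂ) * (Complex.I * ((-1:ℤ):ℂ) * c1 (-1))) * F1 x
        + (Complex.I * ((1:ℤ):ℂ) * (Complex.I * ((1:ℤ):ℂ) * c1 1)) * F2 x) x := by
      rw [hg2w]; exact hwd2 x
    exact (hgd2 x).unique hder
  intro x
  have hfin : ((f3 x : ℂ)) = -((f1 x : ℂ)) := by
    rw [hstep3 x]
    have hptx := hpt x
    rw [hg1] at hptx
    simp only at hptx
    rw [hptx]
    push_cast
    linear_combination (c1 (-1) * F1 x + c1 1 * F2 x) * Complex.I_sq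
  exact_mod_cast hfin

lemma periodic_deriv'' {f : ℝ → ℝ} {T : ℝ} (hf : Function.Periodic f T) :
    Function.Periodic (deriv f) T := by
  intro x
  rw [← deriv_comp_add_const]
  congr 1
  funext y
  exact hf y

theorem stmt_8 (L : ℝ) (hL : 0 < L) :
    ∃ ε : ℝ, 0 < ε ∧
      ∀ hstar : ℝ, 1 / L ≤ hstar → hstar ≤ L →
        ∀ h : ℝ → ℝ, Function.Periodic h (2 * π) → ContDiff ℝ 4 h →
          (∀ θ, 0 < h θ) →
          (∀ θ : ℝ, deriv (fun φ => (h φ) ^ 2 / 2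
              + (h φ) ^ 3 * (deriv h φ + iteratedDeriv 3 h φ)) θ = 0) →
          (∫ θ in (0:ℝ)..(2 * π), h θ) = 2 * π * hstar →
          (∀ θ : ℝ, |h θ - hstar| ≤ ε) →
          ∀ θ : ℝ, h θ = hstar := by
  refine ⟨1, one_pos, ?_⟩
  intro hstar h1L hL2 h hper hreg hpos hE havg _hclose
  set f1 := deriv h with hf1def
  set f2 := deriv f1 with hf2def
  set f3 := deriv f2 with hf3def
  have hid3 : iteratedDeriv 3 h = f3 := by
    simp [iteratedDeriv_succ, iteratedDeriv_zero, hf1def, hf2def, hf3def]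
  simp only [hid3] at hE
  -- regularity
  have hreg' := hreg
  rw [show (4 : WithTop ℕ∞) = 3 + 1 from rfl, contDiff_succ_iff_deriv] at hreg'
  obtain ⟨hdiff0, -, hreg3⟩ := hreg'
  rw [show (3 : WithTop ℕ∞) = 2 + 1 from rfl, contDiff_succ_iff_deriv] at hreg3
  obtain ⟨hdiff1, -, hreg2⟩ := hreg3
  rw [show (2 : WithTop ℕ∞) = 1 + 1 from rfl, contDiff_succ_iff_deriv] at hreg2
  obtain ⟨hdiff2, -, hreg1⟩ := hreg2
  rw [contDiff_one_iff_deriv] at hreg1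
  obtain ⟨hdiff3, hcont4⟩ := hreg1
  have hcont0 : Continuous h := hdiff0.continuous
  have hcont1 : Continuous f1 := hdiff1.continuous
  have hcont2 : Continuous f2 := hdiff2.continuous
  have hcont3 : Continuous f3 := hdiff3.continuous
  have hD0 : ∀ x, HasDerivAt h (f1 x) x := fun x => (hdiff0 x).hasDerivAt
  have hD1 : ∀ x, HasDerivAt f1 (f2 x) x := fun x => (hdiff1 x).hasDerivAt
  have hD2 : ∀ x, HasDerivAt f2 (f3 x) x := fun x => (hdiff2 x).hasDerivAt
  -- periodicity
  have hper1 : Function.Periodic f1 (2*π) := periodic_deriv'' hper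
  have hper2 : Function.Periodic f2 (2*π) := periodic_deriv'' hper1
  have hval0 : h (2*π) = h 0 := by simpa using hper 0
  have hval1 : f1 (2*π) = f1 0 := by simpa using hper1 0
  have hval2 : f2 (2*π) = f2 0 := by simpa using hper2 0
  -- the flux is constant
  set J : ℝ := h 0 ^ 2 / 2 + h 0 ^ 3 * (f1 0 + f3 0) with hJdef
  have hQd : Differentiable ℝ (fun φ => (h φ) ^ 2 / 2 + (h φ) ^ 3 * (f1 φ + f3 φ)) :=
    ((hdiff0.pow 2).div_const 2).add ((hdiff0.pow 3).mul (hdiff1.add hdiff3))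
  have hJ : ∀ θ, h θ ^ 2 / 2 + h θ ^ 3 * (f1 θ + f3 θ) = J := fun θ =>
    is_const_of_deriv_eq_zero hQd hE θ 0
  -- first integral identity
  have hI2 : (∫ x in (0:ℝ)..2*π, (f1 x * f1 x + f3 x * f1 x)) = 0 := by
    have hΦd : ∀ x, HasDerivAt (fun y => -J / (2 * (h y)^2) - Real.log (h y) / 2)
        (f1 x * f1 x + f3 x * f1 x) x := by
      intro x
      have hx := hpos x
      have hxne : h x ≠ 0 := ne_of_gt hx
      have d1 : HasDerivAt (fun y => (h y)^2) (2 * h x * f1 x) x := by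
        have := (hD0 x).pow 2
        simp at this
        exact this
      have dA : HasDerivAt (fun y => -J / (2 * (h y)^2))
          ((0 * (2 * (h x)^2) - (-J) * (2 * (2 * h x * f1 x))) / (2 * (h x)^2)^2) x :=
        (hasDerivAt_const x (-J)).div (d1.const_mul 2) (by positivity)
      have dB : HasDerivAt (fun y => Real.log (h y)) ((h x)⁻¹ * f1 x) x :=
        (Real.hasDerivAt_log hxne).comp x (hD0 x)
      have dtot := dA.sub (dB.div_const 2)
      refine dtot.congr_deriv ?_
      have hQx := hJ x
      have hsolve : (f1 x + f3 x) * h x ^ 3 = J - h x ^ 2 / 2 := by linarith [hQx]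
      field_simp
      linear_combination (-2 * f1 x) * hsolve
        + (-2 * f1 x) * hJdef
    rw [integral_eq_sub_of_hasDerivAt (fun x _ => hΦd x)
      (((hcont1.mul hcont1).add (hcont3.mul hcont1)).intervalIntegrable _ _)]
    simp only [hval0, sub_self]
  -- second integral identity
  have hI3 : (∫ x in (0:ℝ)..2*π, (f3 x * f1 x + f2 x * f2 x)) = 0 := by
    have hΨd : ∀ x, HasDerivAt (fun y => f2 y * f1 y) (f3 x * f1 x + f2 x * f2 x) x :=
      fun x => (hD2 x).mul (hD1 x)
    rw [integral_eq_sub_of_hasDerivAt (fun x _ => hΨd x)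
      (((hcont3.mul hcont1).add (hcont2.mul hcont2)).intervalIntegrable _ _)]
    simp only [hval1, hval2, sub_self]
  -- energy equality
  have henergy : (∫ x in (0:ℝ)..2*π, f1 x * f1 x) = ∫ x in (0:ℝ)..2*π, f2 x * f2 x := by
    rw [intervalIntegral.integral_add (f := fun x => f1 x * f1 x) (g := fun x => f3 x * f1 x)
      ((hcont1.mul hcont1).intervalIntegrable _ _)
      ((hcont3.mul hcont1).intervalIntegrable _ _)] at hI2
    rw [intervalIntegral.integral_add (f := fun x => f3 x * f1 x) (g := fun x => f2 x * f2 x)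
      ((hcont3.mul hcont1).intervalIntegrable _ _)
      ((hcont2.mul hcont2).intervalIntegrable _ _)] at hI3
    linarith
  -- mean zero
  have hmean : (∫ x in (0:ℝ)..2*π, f1 x) = 0 := by
    rw [integral_eq_sub_of_hasDerivAt (fun x _ => hD0 x) (hcont1.intervalIntegrable _ _)]
    simp only [hval0, sub_self]
  -- apply the key lemma
  have hkey := third_deriv_neg hcont2 hD1 hD2 hper1 hper2 hmean henergy
  -- conclude h is constant
  have hconst : ∀ θ, h θ = h 0 := by
    intro θ
    have h1 := hJ θ
    have h2 := hJ 0
    rw [hkey θ] at h1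
    rw [hkey 0] at h2
    have e1 : h θ ^ 2 = 2 * J := by rw [← h1]; ring
    have e2 : h 0 ^ 2 = 2 * J := by rw [← h2]; ring
    nlinarith [hpos θ, hpos 0]
  have hint : (∫ θ in (0:ℝ)..(2*π), h θ) = 2 * π * h 0 := by
    rw [intervalIntegral.integral_congr (fun x _ => hconst x)]
    rw [intervalIntegral.integral_const, smul_eq_mul, sub_zero]
  rw [hint] at havg
  have h0eq : h 0 = hstar :=
    mul_left_cancel₀ (by positivity : (2*π:ℝ) ≠ 0) havg
  intro θ
  rw [hconst θ, h0eq]
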